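/- Let G be a diamond-free graph containing an induced 5-cycle v1v2v3v4v5. Let C_{i,i+2} be the vertices outside the cycle adjacent exactly to v_i and v_{i+2}, and B_{j,j+1} the vertices adjacent exactly to v_j and v_{j+1}. If j ≠ i+3 (mod 5), then C_{i,i+2} is anti-complete to B_{j,j+1}; moreover, each vertex of C_{i,i+2} has at most one neighbour in B_{i+3,i+4}. -/

import Mathlib

open SimpleGraph

def diamond : SimpleGraph (Fin 4) := (⊤ : SimpleGraph (Fin 4)).deleteEdges {s(0, 1)}

lemma no_diamond {V : Type*} {G : SimpleGraph V} (hD : ¬ Nonempty (diamond ↪g G))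
    {a b x y : V} (hab : a ≠ b) (hnab : ¬ G.Adj a b)
    (hax : G.Adj a x) (hay : G.Adj a y) (hbx : G.Adj b x) (hby : G.Adj b y)
    (hxy : G.Adj x y) : False := by
  apply hD
  have hax' := hax.ne; have hay' := hay.ne; have hbx' := hbx.ne
  have hby' := hby.ne; have hxy' := hxy.ne
  refine ⟨⟨⟨![a,b,x,y], ?_⟩, ?_⟩⟩
  · intro i j h
    fin_cases i <;> fin_cases j <;> simp_all
  · intro i j
    show G.Adj (![a,b,x,y] i) (![a,b,x,y] j) ↔ diamond.Adj i j
    fin_cases i <;> fin_cases j <;>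
      simp_all [diamond, deleteEdges_adj, hax.symm, hay.symm, hbx.symm, hby.symm,
        hxy.symm, Sym2.eq_iff, adj_comm]

theorem stmt_11 {V : Type*} (G : SimpleGraph V)
    (hD : ¬ Nonempty (diamond ↪g G))
    (v : Fin 5 → V) (hv : Function.Injective v)
    (hC5 : ∀ i j, G.Adj (v i) (v j) ↔ j = i + 1 ∨ i = j + 1)
    (B : Fin 5 → Set V)
    (hB : ∀ i, B i = {u | u ∉ Set.range v ∧ ∀ j, G.Adj u (v j) ↔ (j = i ∨ j = i + 1)})
    (C : Fin 5 → Set V)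
    (hC : ∀ i, C i = {u | u ∉ Set.range v ∧ ∀ j, G.Adj u (v j) ↔ (j = i ∨ j = i + 2)}) :
    (∀ i j, j ≠ i + 3 → ∀ c ∈ C i, ∀ b ∈ B j, ¬ G.Adj c b) ∧
      (∀ i, ∀ c ∈ C i, ∀ b₁ ∈ B (i + 3), ∀ b₂ ∈ B (i + 3),
        G.Adj c b₁ → G.Adj c b₂ → b₁ = b₂) := by
  -- arithmetic facts in Fin 5
  have F1 : ∀ i : Fin 5, ¬ (i + 1 = i ∨ i + 1 = i + 2) := by decide
  have F3 : ∀ i : Fin 5, ¬ (i + 3 = i ∨ i + 3 = i + 2) := by decide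
  have F4 : ∀ i : Fin 5, ¬ (i + 4 = i ∨ i + 4 = i + 2) := by decide
  have F5 : ∀ i : Fin 5, i + 3 + 1 = i + 4 := by decide
  have F6 : ∀ i : Fin 5, i + 4 + 1 = i := by decide
  have F7 : ∀ i : Fin 5, i + 1 + 1 = i + 2 := by decide
  have F8 : ∀ i : Fin 5, i + 2 + 1 = i + 3 := by decide
  constructor
  · intro i j hj c hc b hb hadj
    rw [hC i] at hc; rw [hB j] at hb
    obtain ⟨hcr, hca⟩ := hc
    obtain ⟨hbr, hba⟩ := hb
    have hcase : j = i ∨ j = i + 1 ∨ j = i + 2 ∨ j = i + 4 := by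
      have : ∀ i j : Fin 5, j ≠ i + 3 → (j = i ∨ j = i + 1 ∨ j = i + 2 ∨ j = i + 4) := by
        decide
      exact this i j hj
    have hcvi : G.Adj c (v i) := (hca i).2 (Or.inl rfl)
    have hcvi2 : G.Adj c (v (i + 2)) := (hca (i + 2)).2 (Or.inr rfl)
    rcases hcase with rfl | rfl | rfl | rfl
    · -- b adj v j, v (j+1); non-edge pair (c, v (j+1)), hub (b, v j)
      exact no_diamond hD (fun h => hcr ⟨j + 1, h.symm⟩)
        (fun h => F1 j ((hca (j + 1)).1 h))
        hadj hcvi ((hba (j + 1)).2 (Or.inr rfl)).symm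
        ((hC5 (j + 1) j).2 (Or.inr rfl))
        ((hba j).2 (Or.inl rfl))
    · -- b adj v (i+1), v (i+2); non-edge pair (c, v (i+1)), hub (b, v (i+2))
      exact no_diamond hD (fun h => hcr ⟨i + 1, h.symm⟩)
        (fun h => F1 i ((hca (i + 1)).1 h))
        hadj hcvi2 ((hba (i + 1)).2 (Or.inl rfl)).symm
        ((hC5 (i + 1) (i + 2)).2 (Or.inl (F7 i).symm))
        ((hba (i + 2)).2 (Or.inr (F7 i).symm))
    · -- b adj v (i+2), v (i+3); non-edge pair (c, v (i+3)), hub (b, v (i+2))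
      exact no_diamond hD (fun h => hcr ⟨i + 3, h.symm⟩)
        (fun h => F3 i ((hca (i + 3)).1 h))
        hadj hcvi2 ((hba (i + 3)).2 (Or.inr (F8 i).symm)).symm
        ((hC5 (i + 3) (i + 2)).2 (Or.inr (F8 i).symm))
        ((hba (i + 2)).2 (Or.inl rfl))
    · -- b adj v (i+4), v i; non-edge pair (c, v (i+4)), hub (b, v i)
      exact no_diamond hD (fun h => hcr ⟨i + 4, h.symm⟩)
        (fun h => F4 i ((hca (i + 4)).1 h))
        hadj hcvi ((hba (i + 4)).2 (Or.inl rfl)).symm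
        ((hC5 (i + 4) i).2 (Or.inl (F6 i).symm))
        ((hba i).2 (Or.inr (F6 i).symm))
  · intro i c hc b₁ hb₁ b₂ hb₂ h1 h2
    rw [hC i] at hc; rw [hB (i + 3)] at hb₁ hb₂
    obtain ⟨hcr, hca⟩ := hc
    obtain ⟨hb₁r, hb₁a⟩ := hb₁
    obtain ⟨hb₂r, hb₂a⟩ := hb₂
    by_contra hne
    by_cases hbb : G.Adj b₁ b₂
    · -- diamond on {c, v(i+3)} with hub b₁, b₂
      exact no_diamond hD (fun h => hcr ⟨i + 3, h.symm⟩)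
        (fun h => F3 i ((hca (i + 3)).1 h))
        h1 h2 ((hb₁a (i + 3)).2 (Or.inl rfl)).symm
        ((hb₂a (i + 3)).2 (Or.inl rfl)).symm hbb
    · -- diamond on {b₁, b₂} with hub v(i+3), v(i+4)
      exact no_diamond hD hne hbb
        ((hb₁a (i + 3)).2 (Or.inl rfl))
        ((hb₁a (i + 4)).2 (Or.inr (F5 i).symm))
        ((hb₂a (i + 3)).2 (Or.inl rfl))
        ((hb₂a (i + 4)).2 (Or.inr (F5 i).symm))
        ((hC5 (i + 3) (i + 4)).2 (Or.inl (F5 i).symm))
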